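/- A graph on n vertices can have at most 3^{n/3} maximal cliques (Moon–Moser bound); consequently, the number of stable fixed points of a symmetric CTLN on n nodes, which are in bijection with maximal cliques of its graph, is at most 3^{n/3}. -/

import Mathlib

open Finset

noncomputable def maxCliques {V : Type} [Fintype V] (G : SimpleGraph V) : Finset (Finset V) :=
  Set.Finite.toFinset (Set.toFinite
    {s : Finset V | G.IsClique ↑s ∧ ∀ t : Finset V, G.IsClique ↑t → s ⊆ t → s = t})

lemma mem_maxCliques {V : Type} [Fintype V] {G : SimpleGraph V} {s : Finset V} :
    s ∈ maxCliques G ↔ G.IsClique ↑s ∧ ∀ t : Finset V, G.IsClique ↑t → s ⊆ t → s = t :=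
  Set.Finite.mem_toFinset _

lemma cube_le (m : ℕ) : m ^ 3 ≤ 3 ^ m := by
  induction m with
  | zero => decide
  | succ k ih =>
    rcases Nat.lt_or_ge k 3 with h | h
    · interval_cases k <;> decide
    · calc (k+1)^3 ≤ 3 * k^3 := by
            nlinarith [Nat.mul_le_mul_right (k*k) h, Nat.mul_le_mul_right k h, h]
        _ ≤ 3 * 3^k := by omega
        _ = 3^(k+1) := by ring

lemma nat_le_rpow (m : ℕ) : (m:ℝ) ≤ (3:ℝ) ^ ((m:ℝ)/3) := by
  have h3 : (0:ℝ) < 3 := by norm_num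
  have h : ((m:ℝ))^(3:ℕ) ≤ ((3:ℝ) ^ ((m:ℝ)/3))^(3:ℕ) := by
    have e : ((3:ℝ) ^ ((m:ℝ)/3))^(3:ℕ) = (3:ℝ)^(m:ℝ) := by
      rw [← Real.rpow_natCast ((3:ℝ) ^ ((m:ℝ)/3)) 3, ← Real.rpow_mul (le_of_lt h3)]
      norm_num
    rw [e, Real.rpow_natCast]
    exact_mod_cast cube_le m
  exact le_of_pow_le_pow_left₀ (by norm_num) (Real.rpow_nonneg (le_of_lt h3) _) h

lemma filter_card_le {V : Type} [Fintype V] [DecidableEq V] (G : SimpleGraph V)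
    [DecidableRel G.Adj] (w : V) :
    ((maxCliques G).filter (fun K => w ∈ K)).card
      ≤ (maxCliques (G.induce (G.neighborSet w))).card := by
  classical
  apply Finset.card_le_card_of_injOn
    (fun K => (K.erase w).subtype (fun x => x ∈ G.neighborSet w))
  · intro K hK
    rw [Finset.mem_coe, Finset.mem_filter, mem_maxCliques] at hK
    obtain ⟨⟨hKcl, hKmax⟩, hwK⟩ := hK
    have hadj : ∀ x ∈ K.erase w, G.Adj w x := by
      intro x hx
      rw [Finset.mem_erase] at hx
      exact hKcl (Finset.mem_coe.mpr hwK) (Finset.mem_coe.mpr hx.2) (Ne.symm hx.1)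
    rw [Finset.mem_coe, mem_maxCliques]
    constructor
    · intro a ha b hb hab
      rw [Finset.mem_coe, Finset.mem_subtype] at ha hb
      have : G.Adj ↑a ↑b :=
        hKcl (Finset.mem_coe.mpr (Finset.mem_of_mem_erase ha))
          (Finset.mem_coe.mpr (Finset.mem_of_mem_erase hb))
          (fun e => hab (Subtype.coe_injective e))
      simpa using this
    · intro t ht hst
      set T : Finset V := insert w (t.map (Function.Embedding.subtype _)) with hT
      have hTcl : G.IsClique ↑T := by
        intro x hx y hy hxy
        rw [Finset.mem_coe, hT, Finset.mem_insert] at hx hy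
        rcases hx with rfl | hx
        · rcases hy with rfl | hy
          · exact absurd rfl hxy
          · obtain ⟨b, hb, rfl⟩ := Finset.mem_map.mp hy
            exact (G.mem_neighborSet _ _).mp b.2
        · obtain ⟨a, ha, rfl⟩ := Finset.mem_map.mp hx
          rcases hy with rfl | hy
          · exact ((G.mem_neighborSet _ _).mp a.2).symm
          · obtain ⟨b, hb, rfl⟩ := Finset.mem_map.mp hy
            have hab : a ≠ b := fun e => hxy (by rw [e])
            have := ht (Finset.mem_coe.mpr ha) (Finset.mem_coe.mpr hb) hab
            simpa using this
      have hKT : K ⊆ T := by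
        intro x hx
        by_cases hxw : x = w
        · rw [hT, hxw]; exact Finset.mem_insert_self _ _
        · have hxe : x ∈ K.erase w := Finset.mem_erase.mpr ⟨hxw, hx⟩
          have hpx : x ∈ G.neighborSet w := hadj x hxe
          have hmem : (⟨x, hpx⟩ : G.neighborSet w) ∈ t := by
            apply hst
            rw [Finset.mem_subtype]
            exact hxe
          rw [hT, Finset.mem_insert]
          exact Or.inr (Finset.mem_map.mpr ⟨⟨x, hpx⟩, hmem, rfl⟩)
      have hKeqT : K = T := hKmax T hTcl hKT
      refine Finset.Subset.antisymm hst ?_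
      intro a hat
      rw [Finset.mem_subtype, Finset.mem_erase]
      refine ⟨fun e => G.irrefl (e ▸ ((G.mem_neighborSet _ _).mp a.2)), ?_⟩
      have : (a : V) ∈ T := by
        rw [hT, Finset.mem_insert]
        exact Or.inr (Finset.mem_map.mpr ⟨a, hat, rfl⟩)
      rwa [← hKeqT] at this
  · intro K1 h1 K2 h2 heq
    have key : ∀ K ∈ (maxCliques G).filter (fun K => w ∈ K),
        K = insert w (((K.erase w).subtype (fun x => x ∈ G.neighborSet w)).map
          (Function.Embedding.subtype _)) := by
      intro K hK
      rw [Finset.mem_filter, mem_maxCliques] at hK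
      obtain ⟨⟨hKcl, -⟩, hwK⟩ := hK
      rw [Finset.subtype_map, Finset.filter_true_of_mem, Finset.insert_erase hwK]
      intro x hx
      rw [Finset.mem_erase] at hx
      exact hKcl (Finset.mem_coe.mpr hwK) (Finset.mem_coe.mpr hx.2) (Ne.symm hx.1)
    rw [key K1 h1, key K2 h2]
    exact congrArg (fun S => insert w (Finset.map (Function.Embedding.subtype _) S)) heq

lemma maxCliques_card_le_of_isEmpty {V : Type} [Fintype V] [IsEmpty V]
    (G : SimpleGraph V) : (maxCliques G).card ≤ 1 := by
  apply Finset.card_le_one.mpr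
  intro a _ b _
  rw [Finset.eq_empty_of_isEmpty a, Finset.eq_empty_of_isEmpty b]

lemma moon (N : ℕ) : ∀ (V : Type) [Fintype V] [DecidableEq V] (G : SimpleGraph V)
    [DecidableRel G.Adj], Fintype.card V ≤ N →
    ((maxCliques G).card : ℝ) ≤ (3:ℝ) ^ ((Fintype.card V : ℝ)/3) := by
  induction N with
  | zero =>
    intro V _ _ G _ hcard
    haveI : IsEmpty V := Fintype.card_eq_zero_iff.mp (Nat.le_zero.mp hcard)
    have h1 := maxCliques_card_le_of_isEmpty G
    have h0 : Fintype.card V = 0 := Fintype.card_eq_zero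
    rw [h0]
    simpa using (by exact_mod_cast h1 : ((maxCliques G).card : ℝ) ≤ 1)
  | succ N ih =>
    intro V _ _ G _ hcard
    by_cases hne : Nonempty V
    case neg =>
      haveI : IsEmpty V := not_nonempty_iff.mp hne
      have h1 := maxCliques_card_le_of_isEmpty G
      have h0 : Fintype.card V = 0 := Fintype.card_eq_zero
      rw [h0]
      simpa using (by exact_mod_cast h1 : ((maxCliques G).card : ℝ) ≤ 1)
    case pos =>
    obtain ⟨v, hv⟩ := G.exists_maximal_degree_vertex
    set n := Fintype.card V with hn
    set D := G.maxDegree with hD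
    set W : Finset V := Finset.univ \ G.neighborFinset v with hW
    -- covering
    have cover : maxCliques G ⊆ W.biUnion (fun w => (maxCliques G).filter (fun K => w ∈ K)) := by
      intro K hK
      have hK' := mem_maxCliques.mp hK
      obtain ⟨hKcl, hKmax⟩ := hK'
      rw [Finset.mem_biUnion]
      by_cases hvK : v ∈ K
      · refine ⟨v, ?_, Finset.mem_filter.mpr ⟨hK, hvK⟩⟩
        rw [hW, Finset.mem_sdiff]
        exact ⟨Finset.mem_univ _, fun h => G.irrefl ((G.mem_neighborFinset _ _).mp h)⟩
      · by_cases hall : ∀ u ∈ K, G.Adj v u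
        · exfalso
          have hcl : G.IsClique ↑(insert v K) := by
            rw [Finset.coe_insert]
            exact hKcl.insert (fun b hb _ => hall b (Finset.mem_coe.mp hb))
          have := hKmax (insert v K) hcl (Finset.subset_insert _ _)
          exact hvK (this ▸ Finset.mem_insert_self v K)
        · push_neg at hall
          obtain ⟨u, huK, hu⟩ := hall
          refine ⟨u, ?_, Finset.mem_filter.mpr ⟨hK, huK⟩⟩
          rw [hW, Finset.mem_sdiff]
          exact ⟨Finset.mem_univ _, fun h => hu ((G.mem_neighborFinset _ _).mp h)⟩
    have h1 : (maxCliques G).card ≤ ∑ w ∈ W, ((maxCliques G).filter (fun K => w ∈ K)).card :=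
      le_trans (Finset.card_le_card cover) Finset.card_biUnion_le
    -- per-vertex bound
    have h2 : ∀ w : V, (((maxCliques G).filter (fun K => w ∈ K)).card : ℝ)
        ≤ (3:ℝ) ^ ((D : ℝ)/3) := by
      intro w
      have e1 := filter_card_le G w
      haveI : DecidableRel (G.induce (G.neighborSet w)).Adj :=
        fun a b => inferInstanceAs (Decidable (G.Adj a b))
      have hcard' : Fintype.card (G.neighborSet w) ≤ N := by
        rw [G.card_neighborSet_eq_degree]
        have := G.degree_lt_card_verts w
        omega
      have e2 := ih (G.neighborSet w) (G.induce (G.neighborSet w)) hcard'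
      have e3 : ((Fintype.card (G.neighborSet w) : ℝ))/3 ≤ (D:ℝ)/3 := by
        rw [G.card_neighborSet_eq_degree]
        have := G.degree_le_maxDegree w
        have : (G.degree w : ℝ) ≤ (D : ℝ) := by exact_mod_cast this
        linarith
      calc (((maxCliques G).filter (fun K => w ∈ K)).card : ℝ)
          ≤ ((maxCliques (G.induce (G.neighborSet w))).card : ℝ) := by exact_mod_cast e1
        _ ≤ (3:ℝ) ^ ((Fintype.card (G.neighborSet w) : ℝ)/3) := e2
        _ ≤ (3:ℝ) ^ ((D : ℝ)/3) :=
            Real.rpow_le_rpow_of_exponent_le (by norm_num) e3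
    -- W card
    have hWcard : W.card = n - D := by
      rw [hW, Finset.card_sdiff_of_subset (Finset.subset_univ _), Finset.card_univ,
        G.card_neighborFinset_eq_degree, ← hv]
    have hDn : D ≤ n := by
      rw [hv]
      exact le_of_lt (G.degree_lt_card_verts v)
    -- combine
    have h3 : ((maxCliques G).card : ℝ) ≤ (W.card : ℝ) * (3:ℝ) ^ ((D : ℝ)/3) := by
      calc ((maxCliques G).card : ℝ)
          ≤ ((∑ w ∈ W, ((maxCliques G).filter (fun K => w ∈ K)).card : ℕ) : ℝ) := by
            exact_mod_cast h1
        _ = ∑ w ∈ W, (((maxCliques G).filter (fun K => w ∈ K)).card : ℝ) := by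
            push_cast; ring
        _ ≤ ∑ _w ∈ W, (3:ℝ) ^ ((D : ℝ)/3) := Finset.sum_le_sum (fun w _ => h2 w)
        _ = (W.card : ℝ) * (3:ℝ) ^ ((D : ℝ)/3) := by
            rw [Finset.sum_const, nsmul_eq_mul]
    have h4 : (W.card : ℝ) ≤ (3:ℝ) ^ (((n : ℝ) - (D:ℝ))/3) := by
      rw [hWcard, Nat.cast_sub hDn]
      have := nat_le_rpow (n - D)
      rwa [Nat.cast_sub hDn] at this
    have h5 : (3:ℝ) ^ (((n : ℝ) - (D:ℝ))/3) * (3:ℝ) ^ ((D : ℝ)/3) = (3:ℝ) ^ ((n : ℝ)/3) := by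
      rw [← Real.rpow_add (by norm_num : (0:ℝ) < 3)]
      ring_nf
    calc ((maxCliques G).card : ℝ)
        ≤ (W.card : ℝ) * (3:ℝ) ^ ((D : ℝ)/3) := h3
      _ ≤ (3:ℝ) ^ (((n : ℝ) - (D:ℝ))/3) * (3:ℝ) ^ ((D : ℝ)/3) :=
          mul_le_mul_of_nonneg_right h4 (Real.rpow_nonneg (by norm_num) _)
      _ = (3:ℝ) ^ ((n : ℝ)/3) := h5

/-- Moon–Moser bound: a graph on n vertices has at most 3^(n/3) maximal cliques;
hence the stable fixed points of a symmetric CTLN, in bijection with the maximal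
cliques of its graph, number at most 3^(n/3). -/
theorem stmt19 {n : ℕ} (G : SimpleGraph (Fin n)) [DecidableRel G.Adj]
    (F : Set (Fin n → ℝ))
    (hbij : Nonempty (F ≃ {s : Finset (Fin n) | G.IsClique ↑s ∧
      ∀ t : Finset (Fin n), G.IsClique ↑t → s ⊆ t → s = t})) :
    (({s : Finset (Fin n) | G.IsClique ↑s ∧
        ∀ t : Finset (Fin n), G.IsClique ↑t → s ⊆ t → s = t} :
          Set (Finset (Fin n))).ncard : ℝ) ≤ (3 : ℝ) ^ ((n : ℝ) / 3) ∧
    (F.ncard : ℝ) ≤ (3 : ℝ) ^ ((n : ℝ) / 3) := by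
  have hset : ({s : Finset (Fin n) | G.IsClique ↑s ∧
      ∀ t : Finset (Fin n), G.IsClique ↑t → s ⊆ t → s = t} :
        Set (Finset (Fin n))).ncard = (maxCliques G).card := by
    rw [maxCliques]
    exact Set.ncard_eq_toFinset_card _ _
  have hmain : (((maxCliques G).card : ℕ) : ℝ) ≤ (3 : ℝ) ^ ((n : ℝ) / 3) := by
    have := moon n (Fin n) G (le_of_eq (Fintype.card_fin n))
    simpa [Fintype.card_fin] using this
  constructor
  · rw [hset]; exact hmain
  · have hF : F.ncard = ({s : Finset (Fin n) | G.IsClique ↑s ∧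
        ∀ t : Finset (Fin n), G.IsClique ↑t → s ⊆ t → s = t} :
          Set (Finset (Fin n))).ncard := by
      rw [← Nat.card_coe_set_eq, ← Nat.card_coe_set_eq]
      exact Nat.card_congr hbij.some
    rw [hF, hset]; exact hmain
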